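/- For every k ≥ 1, there exists a graph G and an orientation G⃗ of G such that bdim(G) = 2^k + k - 1 while adim(G⃗) ≤ k. -/

import Mathlib

open SimpleGraph Finset

/-- `A` is an adjacency resolving set of `G`. -/
def IsAdjResolving {V : Type*} (G : SimpleGraph V) (A : Set V) : Prop :=
  ∀ x y : V, x ≠ y → ∃ z ∈ A, min (G.edist z x) 2 ≠ min (G.edist z y) 2

/-- The adjacency dimension of `G`. -/
noncomputable def adim {V : Type*} [Fintype V] [DecidableEq V] (G : SimpleGraph V) : ℕ :=
  sInf {n | ∃ A : Finset V, IsAdjResolving G ↑A ∧ A.card = n}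

/-- `C` is a locating-dominating set of `G`. -/
def IsLocDom {V : Type*} (G : SimpleGraph V) (C : Set V) : Prop :=
  (∀ v ∉ C, ((G.neighborSet v ∪ {v}) ∩ C).Nonempty) ∧
  ∀ u ∉ C, ∀ v ∉ C, u ≠ v →
    (G.neighborSet u ∪ {u}) ∩ C ≠ (G.neighborSet v ∪ {v}) ∩ C

/-- The locating-dominating number of `G`. -/
noncomputable def LD {V : Type*} [Fintype V] [DecidableEq V] (G : SimpleGraph V) : ℕ :=
  sInf {n | ∃ C : Finset V, IsLocDom G ↑C ∧ C.card = n}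

/-- `f` is a resolving broadcast of `G`. -/
def IsResolvingBroadcast {V : Type*} (G : SimpleGraph V) (f : V → ℕ) : Prop :=
  ∀ x y : V, x ≠ y → ∃ z, 0 < f z ∧
    min (G.edist z x) ((f z : ℕ∞) + 1) ≠ min (G.edist z y) ((f z : ℕ∞) + 1)

/-- The broadcast dimension of `G`. -/
noncomputable def bdim {V : Type*} [Fintype V] (G : SimpleGraph V) : ℕ :=
  sInf {n | ∃ f : V → ℕ, IsResolvingBroadcast G f ∧ ∑ v, f v = n}

/-- There is a directed path of length `m` from `u` to `v` in the digraph `D`. -/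
def DPath {V : Type*} (D : V → V → Prop) (u v : V) (m : ℕ) : Prop :=
  ∃ p : Fin (m + 1) → V, p 0 = u ∧ p (Fin.last m) = v ∧
    ∀ i : Fin m, D (p i.castSucc) (p i.succ)

/-- Directed distance in the digraph `D` (∞ if there is no directed path). -/
noncomputable def ddist {V : Type*} (D : V → V → Prop) (u v : V) : ℕ∞ :=
  sInf {n : ℕ∞ | ∃ m : ℕ, DPath D u v m ∧ n = m}

/-- `A` is an adjacency resolving set of the digraph `D`. -/
def IsDirAdjResolving {V : Type*} (D : V → V → Prop) (A : Set V) : Prop :=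
  ∀ x y : V, x ≠ y → ∃ z ∈ A, min (ddist D z x) 2 ≠ min (ddist D z y) 2

/-- The adjacency dimension of the digraph `D`. -/
noncomputable def dirAdim {V : Type*} [Fintype V] [DecidableEq V] (D : V → V → Prop) : ℕ :=
  sInf {n | ∃ A : Finset V, IsDirAdjResolving D ↑A ∧ A.card = n}

/-- `f` is a resolving broadcast of the digraph `D`. -/
def IsDirResolvingBroadcast {V : Type*} (D : V → V → Prop) (f : V → ℕ) : Prop :=
  ∀ x y : V, x ≠ y → ∃ z, 0 < f z ∧
    min (ddist D z x) ((f z : ℕ∞) + 1) ≠ min (ddist D z y) ((f z : ℕ∞) + 1)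

/-- The broadcast dimension of the digraph `D`. -/
noncomputable def dirBdim {V : Type*} [Fintype V] (D : V → V → Prop) : ℕ :=
  sInf {n | ∃ f : V → ℕ, IsDirResolvingBroadcast D f ∧ ∑ v, f v = n}

/-- `D` is an orientation of the simple graph `G`. -/
def IsOrientation {V : Type*} (G : SimpleGraph V) (D : V → V → Prop) : Prop :=
  (∀ u v, G.Adj u v ↔ (D u v ∨ D v u)) ∧ ∀ u v, ¬(D u v ∧ D v u)

section Aux
variable {V : Type*} {D : V → V → Prop} {z x : V}

lemma ddist_self' (z : V) : ddist D z z = 0 := by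
  have : (0 : ℕ∞) ∈ {n : ℕ∞ | ∃ m : ℕ, DPath D z z m ∧ n = m} :=
    ⟨0, ⟨fun _ => z, rfl, rfl, fun i => i.elim0⟩, by simp⟩
  exact le_antisymm (sInf_le this) zero_le

lemma one_le_ddist (h : z ≠ x) : 1 ≤ ddist D z x := by
  apply le_sInf
  rintro n ⟨m, ⟨p, h0, hl, _⟩, rfl⟩
  match m with
  | 0 => exact absurd (h0.symm.trans hl) h
  | (m+1) => exact_mod_cast Nat.succ_le_succ (Nat.zero_le m)

lemma ddist_le_one (h : D z x) : ddist D z x ≤ 1 := by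
  apply sInf_le
  exact ⟨1, ⟨![z, x], rfl, rfl, fun i => by fin_cases i; simpa using h⟩, by simp⟩

lemma two_le_ddist (h : z ≠ x) (h2 : ¬ D z x) : 2 ≤ ddist D z x := by
  apply le_sInf
  rintro n ⟨m, ⟨p, h0, hl, hs⟩, rfl⟩
  match m with
  | 0 => exact absurd (h0.symm.trans hl) h
  | 1 =>
      have := hs 0
      rw [show ((0 : Fin 1).castSucc) = 0 from rfl, h0,
        show ((0 : Fin 1).succ) = Fin.last 1 from rfl, hl] at this
      exact absurd this h2
  | (m+2) => exact_mod_cast Nat.le_add_left 2 m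

lemma min_ddist_self (z : V) : min (ddist D z z) 2 = 0 := by
  simp [ddist_self' (D := D) z]

lemma min_ddist_eq_one (h : z ≠ x) (hD : D z x) : min (ddist D z x) 2 = 1 :=
  le_antisymm ((min_le_left _ _).trans (ddist_le_one hD))
    (le_min (one_le_ddist h) one_le_two)

lemma min_ddist_eq_two (h : z ≠ x) (h2 : ¬ D z x) : min (ddist D z x) 2 = 2 :=
  le_antisymm (min_le_right _ _) (le_min (two_le_ddist h h2) le_rfl)

lemma one_le_min_ddist (h : z ≠ x) : 1 ≤ min (ddist D z x) 2 :=
  le_min (one_le_ddist h) one_le_two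

end Aux

/-- There is a graph `G` with `bdim(G) = 2^k + k - 1` having an orientation
`G⃗` with `adim(G⃗) ≤ k`. -/
theorem stmt_14 (k : ℕ) (hk : 1 ≤ k) :
    ∃ (G : SimpleGraph (Fin (2 ^ k + k))) (D : Fin (2 ^ k + k) → Fin (2 ^ k + k) → Prop),
      IsOrientation G D ∧ bdim G = 2 ^ k + k - 1 ∧ dirAdim D ≤ k := by
  set n := 2 ^ k + k with hn
  have hpow : 2 ≤ 2 ^ k := by
    calc 2 = 2 ^ 1 := rfl
    _ ≤ 2 ^ k := Nat.pow_le_pow_right (by norm_num) hk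
  have hkn : k < n := by omega
  have hnpos : 0 < n := by omega
  set D : Fin n → Fin n → Prop := fun u v => (u : ℕ) ≠ (v : ℕ) ∧
    (if (u : ℕ) < k then
      (if (v : ℕ) < k then (u : ℕ) < (v : ℕ)
       else Nat.testBit ((v : ℕ) - k) (u : ℕ) = false)
     else (if (v : ℕ) < k then Nat.testBit ((u : ℕ) - k) (v : ℕ) = true
       else (u : ℕ) < (v : ℕ))) with hD
  have hedist : ∀ x y : Fin n, x ≠ y → (⊤ : SimpleGraph (Fin n)).edist x y = 1 :=
    fun x y h => SimpleGraph.edist_eq_one_iff_adj.mpr ((SimpleGraph.top_adj x y).mpr h)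
  refine ⟨⊤, D, ⟨?_, ?_⟩, ?_, ?_⟩
  · -- Adj ↔ D u v ∨ D v u
    intro u v
    constructor
    · intro huv
      have hne : (u : ℕ) ≠ (v : ℕ) := fun h => huv.ne (Fin.val_injective h)
      simp only [hD]
      by_cases hu : (u : ℕ) < k <;> by_cases hv : (v : ℕ) < k
      · rcases lt_or_gt_of_ne hne with h | h
        · exact Or.inl ⟨hne, by simp [hu, hv, h]⟩
        · exact Or.inr ⟨hne.symm, by simp [hu, hv, h]⟩
      · cases hb : Nat.testBit ((v : ℕ) - k) (u : ℕ)
        · exact Or.inl ⟨hne, by simp [hu, hv, hb]⟩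
        · exact Or.inr ⟨hne.symm, by simp [hu, hv, hb]⟩
      · cases hb : Nat.testBit ((u : ℕ) - k) (v : ℕ)
        · exact Or.inr ⟨hne.symm, by simp [hu, hv, hb]⟩
        · exact Or.inl ⟨hne, by simp [hu, hv, hb]⟩
      · rcases lt_or_gt_of_ne hne with h | h
        · exact Or.inl ⟨hne, by simp [hu, hv, h]⟩
        · exact Or.inr ⟨hne.symm, by simp [hu, hv, h]⟩
    · rintro (⟨hne, _⟩ | ⟨hne, _⟩)
      · exact (SimpleGraph.top_adj u v).mpr (fun h => hne (by rw [h]))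
      · exact ((SimpleGraph.top_adj v u).mpr (fun h => hne (by rw [h]))).symm
  · -- not both directions
    rintro u v ⟨⟨hne, h1⟩, ⟨-, h2⟩⟩
    by_cases hu : (u : ℕ) < k <;> by_cases hv : (v : ℕ) < k
    · rw [if_pos hu, if_pos hv] at h1; rw [if_pos hv, if_pos hu] at h2; omega
    · rw [if_pos hu, if_neg hv] at h1; rw [if_neg hv, if_pos hu] at h2
      simp [h1] at h2
    · rw [if_neg hu, if_pos hv] at h1; rw [if_pos hv, if_neg hu] at h2
      simp [h2] at h1
    · rw [if_neg hu, if_neg hv] at h1; rw [if_neg hv, if_neg hu] at h2; omega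
  · -- bdim ⊤ = n - 1
    set d0 : Fin n := ⟨0, hnpos⟩ with hd0
    set f : Fin n → ℕ := fun v => if v = d0 then 0 else 1 with hf
    have hsum : ∑ v, f v = n - 1 := by
      rw [← Finset.sum_erase_add _ _ (Finset.mem_univ d0)]
      simp only [hf, if_pos rfl, add_zero]
      rw [Finset.sum_congr rfl (fun v hv => if_neg (Finset.ne_of_mem_erase hv))]
      simp [Finset.card_erase_of_mem]
    have hres : IsResolvingBroadcast (⊤ : SimpleGraph (Fin n)) f := by
      intro x y hxy
      rcases ne_or_eq x d0 with hx | hx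
      · refine ⟨x, by simp [hf, hx], ?_⟩
        rw [SimpleGraph.edist_self, hedist x y hxy]
        simp [hf, hx]
      · have hy : y ≠ d0 := by rw [← hx]; exact hxy.symm
        refine ⟨y, by simp [hf, hy], ?_⟩
        rw [SimpleGraph.edist_self, hedist y x hxy.symm]
        simp [hf, hy]
    have hlow : ∀ m ∈ {m | ∃ g : Fin n → ℕ,
        IsResolvingBroadcast (⊤ : SimpleGraph (Fin n)) g ∧ ∑ v, g v = m}, n - 1 ≤ m := by
      rintro m ⟨g, hg, rfl⟩
      have hone : (Finset.univ.filter (fun v => g v = 0)).card ≤ 1 := by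
        rw [Finset.card_le_one]
        intro a ha b hb
        by_contra hab
        obtain ⟨z, hz, hmin⟩ := hg a b hab
        have hga : g a = 0 := (Finset.mem_filter.mp ha).2
        have hgb : g b = 0 := (Finset.mem_filter.mp hb).2
        have hza : z ≠ a := fun h => by rw [h, hga] at hz; exact lt_irrefl 0 hz
        have hzb : z ≠ b := fun h => by rw [h, hgb] at hz; exact lt_irrefl 0 hz
        exact hmin (by rw [hedist z a hza, hedist z b hzb])
      have hcards := Finset.card_filter_add_card_filter_not
        (s := (Finset.univ : Finset (Fin n))) (p := fun v => g v = 0)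
      have hcu : (Finset.univ : Finset (Fin n)).card = n := by simp
      calc n - 1 ≤ (Finset.univ.filter (fun v => ¬ g v = 0)).card := by omega
      _ = ∑ _v ∈ Finset.univ.filter (fun v => ¬ g v = 0), 1 :=
          Finset.card_eq_sum_ones _
      _ ≤ ∑ v ∈ Finset.univ.filter (fun v => ¬ g v = 0), g v :=
          Finset.sum_le_sum (fun v hv =>
            Nat.one_le_iff_ne_zero.mpr (Finset.mem_filter.mp hv).2)
      _ ≤ ∑ v, g v := Finset.sum_le_sum_of_subset (Finset.filter_subset _ _)
    exact le_antisymm (Nat.sInf_le ⟨f, hres, hsum⟩) (le_csInf ⟨n - 1, f, hres, hsum⟩ hlow)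
  · -- dirAdim ≤ k
    set A : Finset (Fin n) := Finset.image (fun i : Fin k => Fin.castLE hkn.le i)
      Finset.univ with hA
    have hres : IsDirAdjResolving D ↑A := by
      intro x y hxy
      have hvne : (x : ℕ) ≠ (y : ℕ) := fun h => hxy (Fin.val_injective h)
      by_cases hx : (x : ℕ) < k
      · refine ⟨x, Finset.mem_coe.mpr (Finset.mem_image.mpr
          ⟨⟨(x : ℕ), hx⟩, Finset.mem_univ _, by ext; rfl⟩), ?_⟩
        rw [min_ddist_self]
        intro h
        have h1 := one_le_min_ddist (D := D) hxy
        rw [← h] at h1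
        simp at h1
      · by_cases hy : (y : ℕ) < k
        · refine ⟨y, Finset.mem_coe.mpr (Finset.mem_image.mpr
            ⟨⟨(y : ℕ), hy⟩, Finset.mem_univ _, by ext; rfl⟩), ?_⟩
          rw [min_ddist_self]
          intro h
          have h1 := one_le_min_ddist (D := D) (Ne.symm hxy)
          rw [h] at h1
          simp at h1
        · have hbx : (x : ℕ) - k < 2 ^ k := by omega
          have hby : (y : ℕ) - k < 2 ^ k := by omega
          obtain ⟨i, hi⟩ : ∃ i, Nat.testBit ((x : ℕ) - k) i ≠ Nat.testBit ((y : ℕ) - k) i := by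
            by_contra hcon
            push_neg at hcon
            have : (x : ℕ) - k = (y : ℕ) - k := Nat.eq_of_testBit_eq hcon
            omega
          have hik : i < k := by
            by_contra hik
            push_neg at hik
            rw [Nat.testBit_eq_false_of_lt
                (lt_of_lt_of_le hbx (Nat.pow_le_pow_right (by norm_num) hik)),
              Nat.testBit_eq_false_of_lt
                (lt_of_lt_of_le hby (Nat.pow_le_pow_right (by norm_num) hik))] at hi
            exact hi rfl
          set z : Fin n := ⟨i, lt_trans hik hkn⟩ with hz
          have hzk : (z : ℕ) < k := hik
          have hzx : z ≠ x := fun h => absurd (congrArg Fin.val h) (by simp [hz]; omega)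
          have hzy : z ≠ y := fun h => absurd (congrArg Fin.val h) (by simp [hz]; omega)
          have hmem : z ∈ (A : Set (Fin n)) := Finset.mem_coe.mpr (Finset.mem_image.mpr
            ⟨⟨i, hik⟩, Finset.mem_univ _, rfl⟩)
          have hDx : D z x = ((z : ℕ) ≠ (x : ℕ) ∧ Nat.testBit ((x : ℕ) - k) i = false) := by
            simp only [hD]
            rw [if_pos hzk, if_neg hx]
          have hDy : D z y = ((z : ℕ) ≠ (y : ℕ) ∧ Nat.testBit ((y : ℕ) - k) i = false) := by
            simp only [hD]
            rw [if_pos hzk, if_neg hy]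
          refine ⟨z, hmem, ?_⟩
          cases hb : Nat.testBit ((x : ℕ) - k) i <;>
            cases hc : Nat.testBit ((y : ℕ) - k) i
          · rw [hb, hc] at hi; exact absurd rfl hi
          · rw [min_ddist_eq_one hzx (hDx ▸ ⟨by omega, hb⟩),
              min_ddist_eq_two hzy (fun h => by rw [hDy] at h; rw [h.2] at hc; cases hc)]
            decide
          · rw [min_ddist_eq_two hzx (fun h => by rw [hDx] at h; rw [h.2] at hb; cases hb),
              min_ddist_eq_one hzy (hDy ▸ ⟨by omega, hc⟩)]
            decide
          · rw [hb, hc] at hi; exact absurd rfl hi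
    calc dirAdim D ≤ A.card := Nat.sInf_le ⟨A, hres, rfl⟩
    _ ≤ (Finset.univ : Finset (Fin k)).card := Finset.card_image_le
    _ = k := by simp
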